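/- Let F be a field, let S be a finite nonempty subset of F, and let n, ℓ, d be natural numbers. Let φ₁, …, φ_ℓ be pairwise distinct multivariate polynomials in n variables over F, each of total degree at most d. If v = (v₁, …, v_n) is drawn uniformly at random from S^n (each coordinate independent and uniform on S), then the probability that there exist indices i ≠ j with φ_i(v) = φ_j(v) is at most ℓ²·d / |S|. -/

import Mathlib

open scoped Classical

lemma sz_aux {F : Type*} [Field F] (S : Finset F) :
    ∀ (n : ℕ) (p : MvPolynomial (Fin n) F), p ≠ 0 →
      ((Fintype.piFinset fun _ : Fin n => S).filter
        (fun v => MvPolynomial.eval v p = 0)).card * S.card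
        ≤ p.totalDegree * S.card ^ n := by
  intro n
  induction n with
  | zero =>
    intro p hp
    obtain ⟨a, rfl⟩ : ∃ a, p = MvPolynomial.C a := ⟨_, MvPolynomial.eq_C_of_isEmpty p⟩
    have ha : a ≠ 0 := fun h => hp (by rw [h, map_zero])
    have : ((Fintype.piFinset fun _ : Fin 0 => S).filter
        (fun v => MvPolynomial.eval v (MvPolynomial.C a) = 0)) = ∅ := by
      apply Finset.filter_false_of_mem
      intro v _
      simpa using ha
    rw [this]
    simp
  | succ n ih =>
    intro p hp
    set q := MvPolynomial.finSuccEquiv F n p with hq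
    have hq0 : q ≠ 0 := by
      simpa [hq] using (map_ne_zero_iff _ (MvPolynomial.finSuccEquiv F n).injective).2 hp
    set k := q.natDegree with hk
    set c := q.leadingCoeff with hc
    have hc0 : c ≠ 0 := Polynomial.leadingCoeff_ne_zero.2 hq0
    set T := Fintype.piFinset fun _ : Fin n => S with hT
    set Z := (Fintype.piFinset fun _ : Fin (n+1) => S).filter
        (fun v => MvPolynomial.eval v p = 0) with hZ
    -- fiberwise count over tails
    have hmem : ∀ v ∈ Z, Fin.tail v ∈ T := by
      intro v hv
      rw [hZ, Finset.mem_filter] at hv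
      rw [hT, Fintype.mem_piFinset]
      intro i
      exact (Fintype.mem_piFinset.1 hv.1) i.succ
    have hcard : Z.card = ∑ t ∈ T, (Z.filter (fun v => Fin.tail v = t)).card :=
      Finset.card_eq_sum_card_fiberwise hmem
    -- bound each fiber
    have fiber_le : ∀ t ∈ T, (Z.filter (fun v => Fin.tail v = t)).card
        ≤ if MvPolynomial.eval t c = 0 then S.card else k := by
      intro t ht
      by_cases h : MvPolynomial.eval t c = 0
      · simp only [h, if_true]
        apply Finset.card_le_card_of_injOn (fun v => v 0)
        · intro v hv
          rw [Finset.mem_coe, Finset.mem_filter, hZ, Finset.mem_filter] at hv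
          exact (Fintype.mem_piFinset.1 hv.1.1) 0
        · intro v hv w hw hvw
          rw [Finset.mem_coe, Finset.mem_filter] at hv hw
          have := hv.2; have := hw.2
          funext i
          refine Fin.cases ?_ ?_ i
          · exact hvw
          · intro j
            have : Fin.tail v j = Fin.tail w j := by rw [hv.2, hw.2]
            exact this
      · simp only [h, if_false]
        have hmap0 : (q.map (MvPolynomial.eval t)).leadingCoeff ≠ 0 := by
          rwa [Polynomial.leadingCoeff_map_of_leadingCoeff_ne_zero _ h]
        have hmapne : q.map (MvPolynomial.eval t) ≠ 0 := fun h0 => hmap0 (by simp [h0])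
        have hdeg : (q.map (MvPolynomial.eval t)).natDegree = k :=
          Polynomial.natDegree_map_of_leadingCoeff_ne_zero _ h
        calc (Z.filter (fun v => Fin.tail v = t)).card
            ≤ (q.map (MvPolynomial.eval t)).roots.toFinset.card := by
              apply Finset.card_le_card_of_injOn (fun v => v 0)
              · intro v hv
                rw [Finset.mem_coe, Finset.mem_filter] at hv
                have hv2 := hv.2
                have hv1 := hv.1
                rw [hZ, Finset.mem_filter] at hv1
                have heval : Polynomial.eval (v 0) (q.map (MvPolynomial.eval t)) = 0 := by
                  have := MvPolynomial.eval_eq_eval_mv_eval' (Fin.tail v) (v 0) p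
                  rw [Fin.cons_self_tail, ← hq] at this
                  rw [← hv2, ← this]
                  exact hv1.2
                rw [Finset.mem_coe, Multiset.mem_toFinset, Polynomial.mem_roots hmapne]
                exact heval
              · intro v hv w hw hvw
                rw [Finset.mem_coe, Finset.mem_filter] at hv hw
                funext i
                refine Fin.cases hvw (fun j => ?_) i
                show Fin.tail v j = Fin.tail w j
                rw [hv.2, hw.2]
          _ ≤ Multiset.card (q.map (MvPolynomial.eval t)).roots := Multiset.toFinset_card_le _
          _ ≤ (q.map (MvPolynomial.eval t)).natDegree := Polynomial.card_roots' _
          _ = k := hdeg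
    -- split sum into bad and good tails
    have hsum : ∑ t ∈ T, (Z.filter (fun v => Fin.tail v = t)).card
        ≤ (T.filter (fun t => MvPolynomial.eval t c = 0)).card * S.card + S.card ^ n * k := by
      calc ∑ t ∈ T, (Z.filter (fun v => Fin.tail v = t)).card
          ≤ ∑ t ∈ T, (if MvPolynomial.eval t c = 0 then S.card else k) :=
            Finset.sum_le_sum fiber_le
        _ = (T.filter (fun t => MvPolynomial.eval t c = 0)).card * S.card
            + (T.filter (fun t => ¬ MvPolynomial.eval t c = 0)).card * k := by
            rw [Finset.sum_ite, Finset.sum_const, Finset.sum_const, smul_eq_mul, smul_eq_mul]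
        _ ≤ (T.filter (fun t => MvPolynomial.eval t c = 0)).card * S.card + S.card ^ n * k := by
            gcongr
            calc (T.filter (fun t => ¬ MvPolynomial.eval t c = 0)).card
                ≤ T.card := Finset.card_filter_le _ _
              _ = S.card ^ n := by simp [hT]
    have ihc : (T.filter (fun t => MvPolynomial.eval t c = 0)).card * S.card
        ≤ c.totalDegree * S.card ^ n := ih c hc0
    have hdegsum : c.totalDegree + k ≤ p.totalDegree := by
      have := MvPolynomial.totalDegree_coeff_finSuccEquiv_add_le p k (by
        rw [← hq]
        show q.coeff k ≠ 0
        rwa [hk, ← Polynomial.leadingCoeff])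
      rw [← hq] at this
      exact this
    calc Z.card * S.card ≤ ((T.filter (fun t => MvPolynomial.eval t c = 0)).card * S.card
          + S.card ^ n * k) * S.card := by
          rw [hcard]; exact Nat.mul_le_mul_right _ hsum
      _ ≤ (c.totalDegree * S.card ^ n + S.card ^ n * k) * S.card := by
          gcongr
      _ = (c.totalDegree + k) * S.card ^ (n + 1) := by ring
      _ ≤ p.totalDegree * S.card ^ (n + 1) := Nat.mul_le_mul_right _ hdegsum


/-- **Probability test for subpath sums (union bound + Schwartz–Zippel).**
If `φ₁, …, φ_ℓ` are pairwise distinct multivariate polynomials in `n` variables over a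
field `F`, each of total degree at most `d`, and `v` is drawn uniformly from `S^n` for a
finite nonempty `S ⊆ F`, then the probability that some pair of distinct polynomials agree
at `v` is at most `ℓ² · d / |S|`. -/
theorem subpathSum_probability_test {F : Type*} [Field F]
    (S : Finset F) (hS : S.Nonempty) (n ℓ d : ℕ)
    (φ : Fin ℓ → MvPolynomial (Fin n) F)
    (hdist : Function.Injective φ)
    (hdeg : ∀ i, (φ i).totalDegree ≤ d) :
    (((Fintype.piFinset fun _ : Fin n => S).filter
        (fun v => ∃ i j : Fin ℓ, i ≠ j ∧
          MvPolynomial.eval v (φ i) = MvPolynomial.eval v (φ j))).card : ℝ)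
      / (S.card : ℝ) ^ n
      ≤ ((ℓ : ℝ) ^ 2 * (d : ℝ)) / (S.card : ℝ) := by
  classical
  set G := Fintype.piFinset fun _ : Fin n => S with hG
  set Z := G.filter (fun v => ∃ i j : Fin ℓ, i ≠ j ∧
      MvPolynomial.eval v (φ i) = MvPolynomial.eval v (φ j)) with hZdef
  have key : Z.card * S.card ≤ ℓ ^ 2 * d * S.card ^ n := by
    have hsub : Z ⊆ (Finset.univ : Finset (Fin ℓ × Fin ℓ)).biUnion
        (fun ij => G.filter (fun v => ij.1 ≠ ij.2 ∧
          MvPolynomial.eval v (φ ij.1) = MvPolynomial.eval v (φ ij.2))) := by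
      intro v hv
      rw [hZdef, Finset.mem_filter] at hv
      obtain ⟨hvG, i, j, hij, heq⟩ := hv
      exact Finset.mem_biUnion.2 ⟨(i, j), Finset.mem_univ _,
        Finset.mem_filter.2 ⟨hvG, hij, heq⟩⟩
    have pair_bound : ∀ ij : Fin ℓ × Fin ℓ,
        (G.filter (fun v => ij.1 ≠ ij.2 ∧
          MvPolynomial.eval v (φ ij.1) = MvPolynomial.eval v (φ ij.2))).card * S.card
        ≤ d * S.card ^ n := by
      rintro ⟨i, j⟩
      by_cases hij : i = j
      · simp [hij]
      · set q := φ i - φ j with hq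
        have hq0 : q ≠ 0 := sub_ne_zero.2 (fun h => hij (hdist h))
        have hfe : (G.filter (fun v => (i, j).1 ≠ (i, j).2 ∧
            MvPolynomial.eval v (φ (i, j).1) = MvPolynomial.eval v (φ (i, j).2)))
            = G.filter (fun v => MvPolynomial.eval v q = 0) := by
          apply Finset.filter_congr
          intro v _
          simp only [hq, map_sub, sub_eq_zero, ne_eq, hij, not_false_iff, true_and]
        rw [hfe]
        have hqd : q.totalDegree ≤ d := by
          calc q.totalDegree = (φ i + (- φ j)).totalDegree := by rw [hq, sub_eq_add_neg]
            _ ≤ max (φ i).totalDegree (-(φ j)).totalDegree :=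
                MvPolynomial.totalDegree_add _ _
            _ ≤ d := by
                rw [MvPolynomial.totalDegree_neg]
                exact max_le (hdeg i) (hdeg j)
        calc (G.filter (fun v => MvPolynomial.eval v q = 0)).card * S.card
            ≤ q.totalDegree * S.card ^ n := sz_aux S n q hq0
          _ ≤ d * S.card ^ n := Nat.mul_le_mul_right _ hqd
    calc Z.card * S.card
        ≤ (∑ ij : Fin ℓ × Fin ℓ, (G.filter (fun v => ij.1 ≠ ij.2 ∧
            MvPolynomial.eval v (φ ij.1) = MvPolynomial.eval v (φ ij.2))).card) * S.card := by
          apply Nat.mul_le_mul_right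
          exact le_trans (Finset.card_le_card hsub) (Finset.card_biUnion_le)
      _ = ∑ ij : Fin ℓ × Fin ℓ, (G.filter (fun v => ij.1 ≠ ij.2 ∧
            MvPolynomial.eval v (φ ij.1) = MvPolynomial.eval v (φ ij.2))).card * S.card := by
          rw [Finset.sum_mul]
      _ ≤ ∑ _ij : Fin ℓ × Fin ℓ, d * S.card ^ n :=
          Finset.sum_le_sum (fun ij _ => pair_bound ij)
      _ = ℓ ^ 2 * d * S.card ^ n := by
          simp [Finset.sum_const, Finset.card_univ, mul_assoc, sq]
  have hS0 : (0 : ℝ) < (S.card : ℝ) := by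
    exact_mod_cast Finset.card_pos.2 hS
  rw [div_le_div_iff₀ (by positivity) hS0]
  calc ((Z.card : ℝ)) * (S.card : ℝ)
      ≤ ((ℓ : ℝ) ^ 2 * d * (S.card : ℝ) ^ n) := by exact_mod_cast key
    _ = (ℓ : ℝ) ^ 2 * (d : ℝ) * (S.card : ℝ) ^ n := by ring
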